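/- Let μ̃ be a probability measure on ℤ such that the translation-invariant random walk p̃(k,l) = μ̃(l−k) on ℤ is irreducible, and let φ(c) = ∑_{n∈ℤ} μ̃(n)e^{cn}. Then a function f : ℤ → (0,∞) with f(0) = 1 is a minimal harmonic function for p̃ if and only if there exists c ∈ ℝ with φ(c) = 1 and f(m) = e^{cm} for all m ∈ ℤ. -/

import Mathlib

open Filter Topology ENNReal

/-! ### Generic Markov chain notions -/

/-- `p` is a transition matrix: nonnegative entries, rows summing to `1`. -/
def IsTransMat {X : Type*} (p : X → X → ℝ) : Prop :=
  (∀ x y, 0 ≤ p x y) ∧ ∀ x, HasSum (fun y => p x y) 1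

open Classical in
/-- `n`-step transition probabilities. -/
noncomputable def pstep {X : Type*} (p : X → X → ℝ) : ℕ → X → X → ℝ
  | 0, x, y => if x = y then 1 else 0
  | n + 1, x, y => ∑' z, pstep p n x z * p z y

/-- Irreducibility: any state can be reached from any state. -/
def IsIrredMat {X : Type*} (p : X → X → ℝ) : Prop :=
  ∀ x y, ∃ n : ℕ, 0 < pstep p n x y

/-- Green kernel, valued in `[0,∞]`. -/
noncomputable def Green {X : Type*} (p : X → X → ℝ) (x y : X) : ℝ≥0∞ :=
  ∑' n : ℕ, ENNReal.ofReal (pstep p n x y)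

/-- Transience: the Green kernel is everywhere finite. -/
def IsTransient {X : Type*} (p : X → X → ℝ) : Prop :=
  ∀ x y, Green p x y ≠ ⊤

/-- Martin kernel with respect to a root `o`. -/
noncomputable def Martin {X : Type*} (p : X → X → ℝ) (o x y : X) : ℝ :=
  (Green p x y).toReal / (Green p o y).toReal

/-- Harmonic function: `∑_y p(x,y) h(y)` converges (absolutely) to `h(x)` for all `x`. -/
def IsHarmonic {X : Type*} (p : X → X → ℝ) (h : X → ℝ) : Prop :=
  ∀ x, HasSum (fun y => p x y * h y) (h x)

/-- Minimal positive harmonic function, normalized at the root `o`. -/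
def IsMinimalHarmonic {X : Type*} (p : X → X → ℝ) (o : X) (h : X → ℝ) : Prop :=
  IsHarmonic p h ∧ (∀ x, 0 < h x) ∧ h o = 1 ∧
    ∀ h₁ : X → ℝ, IsHarmonic p h₁ → (∀ x, 0 < h₁ x) → (∀ x, h₁ x ≤ h x) →
      ∃ c : ℝ, ∀ x, h₁ x = c * h x


/-! ### Auxiliary lemmas -/

section AuxMinimalHarmonic

private lemma hasSum_shiftZ' {ν : ℤ → ℝ} {S : ℝ} (h : HasSum ν S) (x : ℤ) :
    HasSum (fun l => ν (l - x)) S := by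
  have := (Equiv.subRight x).hasSum_iff.mpr h
  exact this

private lemma hasSum_translate' {w h : ℤ → ℝ} {x t : ℤ} {S : ℝ}
    (hs : HasSum (fun l => w (l - (x + t)) * h l) S) :
    HasSum (fun l => w (l - x) * h (l + t)) S := by
  have h2 := (Equiv.addRight t).hasSum_iff.mpr hs
  have heq : ((fun l => w (l - (x + t)) * h l) ∘ (Equiv.addRight t))
      = fun l => w (l - x) * h (l + t) := by
    funext l
    simp [add_sub_add_right_eq_sub]
  rwa [heq] at h2

private lemma summable_ite_zero'' {f : ℤ → ℝ} (hf : Summable f) (b : ℤ) :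
    Summable (fun l => if l = b then 0 else f l) := by
  have h1 : HasSum (fun l => if l = b then f b else 0) (f b) := hasSum_ite_eq b (f b)
  refine (hf.sub h1.summable).congr fun l => ?_
  by_cases h : l = b <;> simp [h]

/-- Choquet–Deny style step: a `[0,1]`-valued harmonic function for a random walk
on `ℤ` satisfies `g (m+a) ≤ g m` for every `a` in the support of the step law. -/
private lemma cd_step' (ν : ℤ → ℝ) (hν0 : ∀ n, 0 ≤ ν n) (hν1 : HasSum ν 1)
    (g : ℤ → ℝ) (hg0 : ∀ m, 0 ≤ g m) (hg1 : ∀ m, g m ≤ 1)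
    (hh : ∀ x, HasSum (fun l => ν (l - x) * g l) (g x))
    (a : ℤ) (ha : 0 < ν a) : ∀ m, g (m + a) ≤ g m := by
  set D : ℤ → ℝ := fun m => g (m + a) - g m with hD
  have hsh : ∀ x : ℤ, HasSum (fun l => ν (l - x) * g (l + a)) (g (x + a)) :=
    fun x => hasSum_translate' (hh (x + a))
  have hDsum : ∀ x, HasSum (fun l => ν (l - x) * D l) (D x) := fun x => by
    simpa [hD, mul_sub] using (hsh x).sub (hh x)
  have hDle1 : ∀ m, D m ≤ 1 := fun m => by
    have h1 := hg1 (m + a); have h2 := hg0 m; simp only [hD]; linarith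
  have hne : (Set.range D).Nonempty := ⟨D 0, 0, rfl⟩
  have hbdd : BddAbove (Set.range D) := ⟨1, by rintro _ ⟨m, rfl⟩; exact hDle1 m⟩
  set s := sSup (Set.range D) with hs
  have hDs : ∀ m, D m ≤ s := fun m => le_csSup hbdd ⟨m, rfl⟩
  have hνa1 : ν a ≤ 1 := le_hasSum hν1 a (fun j _ => hν0 j)
  have key : ∀ x : ℤ, s - D (x + a) ≤ (s - D x) / ν a := by
    intro x
    rw [le_div_iff₀ ha]
    have hsum := hDsum x
    have hSummable := hsum.summable
    have heq : D x = ν a * D (x + a) + ∑' l, if l = x + a then 0 else ν (l - x) * D l := by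
      have h0 := Summable.tsum_eq_add_tsum_ite hSummable (x + a)
      rw [hsum.tsum_eq] at h0
      simpa using h0
    have hνs : Summable (fun l : ℤ => ν (l - x)) := (hasSum_shiftZ' hν1 x).summable
    have htail : (∑' l, if l = x + a then 0 else ν (l - x) * D l) ≤ (1 - ν a) * s := by
      have hs1 : Summable (fun l => if l = x + a then 0 else ν (l - x) * D l) :=
        summable_ite_zero'' hSummable (x + a)
      have hs2 : Summable (fun l => (if l = x + a then 0 else ν (l - x)) * s) :=
        (summable_ite_zero'' hνs (x + a)).mul_right s
      have hterm : ∀ l, (if l = x + a then 0 else ν (l - x) * D l)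
          ≤ (if l = x + a then 0 else ν (l - x)) * s := by
        intro l; by_cases h : l = x + a
        · simp [h]
        · simp only [h, if_false]
          exact mul_le_mul_of_nonneg_left (hDs l) (hν0 _)
      calc (∑' l, if l = x + a then 0 else ν (l - x) * D l)
          ≤ ∑' l, (if l = x + a then 0 else ν (l - x)) * s := Summable.tsum_le_tsum hterm hs1 hs2
        _ = (∑' l, if l = x + a then 0 else ν (l - x)) * s := tsum_mul_right
        _ = (1 - ν a) * s := by
            have h0 := Summable.tsum_eq_add_tsum_ite hνs (x + a)
            rw [(hasSum_shiftZ' hν1 x).tsum_eq] at h0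
            have h2 : (∑' l, if l = x + a then 0 else ν (l - x)) = 1 - ν a := by
              simp only [add_sub_cancel_left] at h0
              linarith
            rw [h2]
    nlinarith [heq, htail]
  have hks : ∀ k : ℕ, 1 ≤ k → s ≤ 1 / (k : ℝ) := by
    intro k hk
    have hpow : (0:ℝ) < ν a ^ k := pow_pos ha k
    have hkpos : (0:ℝ) < (k : ℝ) := by exact_mod_cast hk
    refine le_of_forall_pos_le_add ?_
    intro ε hε
    set δ := ε * ν a ^ k with hδ
    have hδpos : 0 < δ := mul_pos hε hpow
    obtain ⟨_, ⟨m, rfl⟩, hm⟩ := exists_lt_of_lt_csSup hne (show s - δ < s by linarith)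
    have hiter : ∀ j : ℕ, s - D (m + (j : ℤ) * a) ≤ δ / ν a ^ j := by
      intro j
      induction j with
      | zero => simpa using (by linarith : s - D m ≤ δ)
      | succ j ih =>
          have h2 := key (m + (j : ℤ) * a)
          calc s - D (m + ((j + 1 : ℕ) : ℤ) * a) = s - D ((m + (j : ℤ) * a) + a) := by
                rw [show ((j + 1 : ℕ) : ℤ) = (j : ℤ) + 1 by push_cast; ring,
                  show m + ((j : ℤ) + 1) * a = (m + (j : ℤ) * a) + a by ring]
            _ ≤ (s - D (m + (j : ℤ) * a)) / ν a := h2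
            _ ≤ (δ / ν a ^ j) / ν a := by gcongr
            _ = δ / ν a ^ (j + 1) := by rw [div_div, pow_succ]
    have htel : g (m + (k : ℤ) * a) - g m = ∑ j ∈ Finset.range k, D (m + (j : ℤ) * a) := by
      have h0 := Finset.sum_range_sub (fun j : ℕ => g (m + (j : ℤ) * a)) k
      simp only [Nat.cast_zero, zero_mul, add_zero] at h0
      rw [← h0]
      refine Finset.sum_congr rfl fun j _ => ?_
      simp only [hD]
      congr 2
      push_cast; ring
    have hlow : ∀ j ∈ Finset.range k, s - δ / ν a ^ k ≤ D (m + (j : ℤ) * a) := by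
      intro j hj
      have hj' := Finset.mem_range.mp hj
      have h1 := hiter j
      have hmono : ν a ^ k ≤ ν a ^ j := pow_le_pow_of_le_one ha.le hνa1 hj'.le
      have h2 : δ / ν a ^ j ≤ δ / ν a ^ k :=
        div_le_div_of_nonneg_left hδpos.le hpow hmono
      linarith
    have hsum_low : (k : ℝ) * (s - δ / ν a ^ k) ≤ g (m + (k : ℤ) * a) - g m := by
      rw [htel]
      calc (k : ℝ) * (s - δ / ν a ^ k)
          = ∑ _j ∈ Finset.range k, (s - δ / ν a ^ k) := by
            rw [Finset.sum_const, Finset.card_range, nsmul_eq_mul]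
        _ ≤ ∑ j ∈ Finset.range k, D (m + (j : ℤ) * a) := Finset.sum_le_sum hlow
    have hub : g (m + (k : ℤ) * a) - g m ≤ 1 := by
      have := hg1 (m + (k : ℤ) * a); have := hg0 m; linarith
    have hδk : δ / ν a ^ k = ε := by rw [hδ, mul_div_assoc, div_self hpow.ne', mul_one]
    rw [hδk] at hsum_low
    have hfin : (k : ℝ) * (s - ε) ≤ 1 := by linarith
    have : s - ε ≤ 1 / (k : ℝ) := by
      rw [le_div_iff₀ hkpos]; nlinarith
    linarith
  have hs0 : s ≤ 0 := by
    by_contra hcon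
    push_neg at hcon
    obtain ⟨k, hk⟩ := exists_nat_gt (1 / s)
    have h1s : 0 < 1 / s := by positivity
    have hk1 : 1 ≤ k := by
      by_contra hk0
      interval_cases k
      · simp at hk; linarith
    have h2 := hks k hk1
    have hkpos : (0:ℝ) < (k:ℝ) := by exact_mod_cast hk1
    have : (1:ℝ) / (k:ℝ) < s := by
      rw [div_lt_iff₀ hkpos]
      rw [div_lt_iff₀ hcon] at hk
      nlinarith
    linarith
  intro m
  have := hDs m
  simp only [hD] at this
  linarith

private lemma pstep_nonneg' {X : Type*} (p : X → X → ℝ) (hp : ∀ x y, 0 ≤ p x y) :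
    ∀ (n : ℕ) (x y : X), 0 ≤ pstep p n x y := by
  intro n
  induction n with
  | zero => intro x y; rw [pstep]; split <;> norm_num
  | succ n ih => intro x y; rw [pstep]; exact tsum_nonneg fun z => mul_nonneg (ih x z) (hp z y)

private lemma exists_decomp' (μ : ℤ → ℝ) (hμ0 : ∀ n, 0 ≤ μ n)
    (hirr : IsIrredMat (fun k l : ℤ => μ (l - k))) (x : ℤ) :
    ∃ L : List ℤ, (∀ b ∈ L, 0 < μ b) ∧ L.sum = x := by
  obtain ⟨n, hn⟩ := hirr 0 x
  clear hirr
  induction n generalizing x with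
  | zero =>
    rw [pstep] at hn
    by_cases h : (0 : ℤ) = x
    · exact ⟨[], fun b hb => absurd hb List.not_mem_nil, by simp [← h]⟩
    · simp [h] at hn
  | succ n ih =>
    rw [pstep] at hn
    have hp : ∀ (a b : ℤ), 0 ≤ (fun k l : ℤ => μ (l - k)) a b := fun a b => hμ0 _
    have hex : ∃ z, 0 < pstep (fun k l : ℤ => μ (l - k)) n 0 z * μ (x - z) := by
      by_contra hcon
      push_neg at hcon
      have hzero : ∀ z, pstep (fun k l : ℤ => μ (l - k)) n 0 z * μ (x - z) = 0 := fun z =>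
        le_antisymm (hcon z) (mul_nonneg (pstep_nonneg' _ hp n 0 z) (hμ0 _))
      simp only [hzero, tsum_zero] at hn
      exact lt_irrefl 0 hn
    obtain ⟨z, hz⟩ := hex
    have h1 : 0 < pstep (fun k l : ℤ => μ (l - k)) n 0 z := by
      rcases (pstep_nonneg' _ hp n 0 z).lt_or_eq with h | h
      · exact h
      · rw [← h] at hz; simp at hz
    have h2 : 0 < μ (x - z) := by
      rcases (hμ0 (x - z)).lt_or_eq with h | h
      · exact h
      · rw [← h] at hz; simp at hz
    obtain ⟨L, hL, hLs⟩ := ih z h1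
    refine ⟨(x - z) :: L, ?_, by simp [hLs]⟩
    intro b hb
    rcases List.mem_cons.mp hb with rfl | hb
    · exact h2
    · exact hL b hb

private lemma sum_invariant' (μ : ℤ → ℝ) (g : ℤ → ℝ)
    (hinv : ∀ a : ℤ, 0 < μ a → ∀ m, g (m + a) = g m) :
    ∀ L : List ℤ, (∀ b ∈ L, 0 < μ b) → g L.sum = g 0 := by
  intro L
  induction L with
  | nil => simp
  | cons b L ih =>
    intro hb
    rw [List.sum_cons, add_comm b L.sum, hinv b (hb b List.mem_cons_self) L.sum]
    exact ih fun c hc => hb c (List.mem_cons_of_mem _ hc)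

private lemma harnack_chain' (μ : ℤ → ℝ) (hμ0 : ∀ n, 0 ≤ μ n) (f : ℤ → ℝ) (hf : ∀ m, 0 < f m)
    (hharm : ∀ x : ℤ, HasSum (fun y => μ (y - x) * f y) (f x)) :
    ∀ L : List ℤ, (∀ b ∈ L, 0 < μ b) → ∀ m, (L.map μ).prod * f (m + L.sum) ≤ f m := by
  intro L
  induction L with
  | nil => intro _ m; simp
  | cons b L ih =>
    intro hb m
    have h1 : μ b * f (m + b) ≤ f m := by
      have := le_hasSum (hharm m) (m + b) (fun j _ => mul_nonneg (hμ0 _) (hf j).le)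
      simpa using this
    have h2 := ih (fun c hc => hb c (List.mem_cons_of_mem _ hc)) (m + b)
    have hμb := hb b List.mem_cons_self
    have harg : m + (b :: L).sum = (m + b) + L.sum := by rw [List.sum_cons]; ring
    rw [harg, List.map_cons, List.prod_cons, mul_assoc]
    calc μ b * ((L.map μ).prod * f (m + b + L.sum)) ≤ μ b * f (m + b) :=
          mul_le_mul_of_nonneg_left h2 hμb.le
      _ ≤ f m := h1

end AuxMinimalHarmonic

/-- For an irreducible random walk `p̃(k,l) = μ̃(l-k)` on `ℤ`, a
positive function `f` with `f(0) = 1` is minimal harmonic iff `f(m) = e^{cm}`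
for some `c ∈ ℝ` with `φ(c) = 1`, where `φ(c) = ∑_n μ̃(n)e^{cn}`. -/
theorem minimal_harmonic_Z_iff_exp (μ : ℤ → ℝ) (hμ0 : ∀ n, 0 ≤ μ n)
    (hμ1 : HasSum μ 1)
    (hirr : IsIrredMat (fun k l : ℤ => μ (l - k)))
    (f : ℤ → ℝ) (hf : ∀ m, 0 < f m) (hf0 : f 0 = 1) :
    IsMinimalHarmonic (fun k l : ℤ => μ (l - k)) 0 f ↔
      ∃ c : ℝ, HasSum (fun n : ℤ => μ n * Real.exp (c * n)) 1 ∧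
        ∀ m : ℤ, f m = Real.exp (c * m) := by
  constructor
  · -- forward direction: minimal harmonic implies exponential
    rintro ⟨hharm, hpos, -, hminimal⟩
    have hharm' : ∀ x : ℤ, HasSum (fun y => μ (y - x) * f y) (f x) := hharm
    -- multiplicativity of f
    have hmult : ∀ a m : ℤ, f (m + a) = f a * f m := by
      intro a
      obtain ⟨L, hL, rfl⟩ := exists_decomp' μ hμ0 hirr a
      have hqpos : 0 < (L.map μ).prod := by
        apply List.prod_pos
        intro c hc
        obtain ⟨b, hb, rfl⟩ := List.mem_map.mp hc
        exact hL b hb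
      have hhar := harnack_chain' μ hμ0 f hf hharm' L hL
      have hh₁harm : IsHarmonic (fun k l : ℤ => μ (l - k))
          (fun m => (L.map μ).prod * f (m + L.sum)) := by
        intro x
        have ht := hasSum_translate' (w := μ) (h := f) (x := x) (t := L.sum) (hharm' (x + L.sum))
        have := ht.mul_left ((L.map μ).prod)
        refine this.congr_fun fun l => ?_
        ring
      obtain ⟨d, hd⟩ := hminimal (fun m => (L.map μ).prod * f (m + L.sum)) hh₁harm
        (fun x => mul_pos hqpos (hf _)) (fun x => hhar x)
      intro m
      have h0 := hd 0
      simp only [zero_add, hf0, mul_one] at h0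
      have hm := hd m
      have hkey : (L.map μ).prod * f (m + L.sum) = (L.map μ).prod * (f L.sum * f m) := by
        rw [hm, ← h0]; ring
      exact mul_left_cancel₀ hqpos.ne' hkey
    -- f is an exponential
    set c := Real.log (f 1) with hc
    have hexpc : Real.exp c = f 1 := Real.exp_log (hf 1)
    have hfe : ∀ m : ℤ, f m = Real.exp (c * m) := by
      intro m
      induction m using Int.induction_on with
      | zero => simp [hf0]
      | succ k ihk =>
        have h1 := hmult 1 (k : ℤ)
        rw [h1, ihk, hexpc.symm, ← Real.exp_add]
        congr 1
        push_cast; ring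
      | pred k ihk =>
        have h1 := hmult 1 (-(k : ℤ) - 1)
        rw [show (-(k : ℤ) - 1) + 1 = -(k : ℤ) by ring] at h1
        have hexpne : Real.exp c ≠ 0 := (Real.exp_pos c).ne'
        have hstep : f (-(k : ℤ) - 1) = Real.exp (c * (-(k : ℤ))) / Real.exp c := by
          rw [eq_div_iff hexpne, hexpc]
          rw [ihk] at h1
          push_cast at h1 ⊢; linarith
        rw [hstep, ← Real.exp_sub]
        congr 1
        push_cast; ring
    refine ⟨c, ?_, hfe⟩
    have h0 := hharm' 0
    simp only [sub_zero, hf0] at h0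
    have heqf : (fun n : ℤ => μ n * Real.exp (c * n)) = fun y : ℤ => μ y * f y := by
      funext n; rw [hfe n]
    rw [heqf]
    exact h0
  · -- backward direction: exponential implies minimal harmonic
    rintro ⟨c, hcsum, hfe⟩
    have hharm' : ∀ x : ℤ, HasSum (fun y => μ (y - x) * f y) (f x) := by
      intro k
      have h1 : HasSum (fun l : ℤ => μ (l - k) * Real.exp (c * ((l - k : ℤ) : ℝ))) 1 :=
        hasSum_shiftZ' hcsum k
      have h2 := h1.mul_left (Real.exp (c * k))
      have heqf : (fun l : ℤ => Real.exp (c * k) * (μ (l - k) * Real.exp (c * ((l - k : ℤ) : ℝ))))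
          = fun l : ℤ => μ (l - k) * f l := by
        funext l
        rw [hfe l, mul_comm (Real.exp (c * (k:ℝ))) _, mul_assoc, ← Real.exp_add]
        congr 2
        push_cast; ring
      rw [heqf, mul_one] at h2
      rw [← hfe k] at h2
      exact h2
    refine ⟨hharm', hf, hf0, ?_⟩
    intro h₁ hh₁ hh₁pos hle
    have hh₁' : ∀ x : ℤ, HasSum (fun y => μ (y - x) * h₁ y) (h₁ x) := hh₁
    set ν : ℤ → ℝ := fun n => μ n * Real.exp (c * n) with hν
    have hν0 : ∀ n, 0 ≤ ν n := fun n => mul_nonneg (hμ0 n) (Real.exp_pos _).le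
    set g : ℤ → ℝ := fun m => h₁ m * Real.exp (-(c * m)) with hg
    have hg0 : ∀ m, 0 ≤ g m := fun m => (mul_pos (hh₁pos m) (Real.exp_pos _)).le
    have hg1 : ∀ m, g m ≤ 1 := by
      intro m
      have hlem := hle m
      rw [hfe m] at hlem
      have : h₁ m * Real.exp (-(c * m)) ≤ Real.exp (c * m) * Real.exp (-(c * m)) :=
        mul_le_mul_of_nonneg_right hlem (Real.exp_pos _).le
      calc g m ≤ Real.exp (c * m) * Real.exp (-(c * m)) := this
        _ = 1 := by rw [← Real.exp_add]; simp
    have hgh : ∀ x : ℤ, HasSum (fun l => ν (l - x) * g l) (g x) := by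
      intro x
      have h1 := (hh₁' x).mul_left (Real.exp (-(c * x)))
      rw [mul_comm (Real.exp (-(c * (x : ℝ)))) (h₁ x)] at h1
      refine (h1.congr_fun fun l => ?_)
      simp only [hν, hg]
      have hex : Real.exp (c * ((l - x : ℤ) : ℝ)) * Real.exp (-(c * (l : ℝ)))
          = Real.exp (-(c * (x : ℝ))) := by
        rw [← Real.exp_add]; congr 1; push_cast; ring
      calc μ (l - x) * Real.exp (c * ((l - x : ℤ) : ℝ)) * (h₁ l * Real.exp (-(c * (l : ℝ))))
          = μ (l - x) * h₁ l * (Real.exp (c * ((l - x : ℤ) : ℝ)) * Real.exp (-(c * (l : ℝ)))) := by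
            ring
        _ = Real.exp (-(c * (x : ℝ))) * (μ (l - x) * h₁ l) := by rw [hex]; ring
    have hinv : ∀ a : ℤ, 0 < μ a → ∀ m, g (m + a) = g m := by
      intro a ha m
      have hνa : 0 < ν a := mul_pos ha (Real.exp_pos _)
      have le1 := cd_step' ν hν0 hcsum g hg0 hg1 hgh a hνa m
      have hgh' : ∀ x : ℤ, HasSum (fun l => ν (l - x) * (1 - g l)) (1 - g x) := by
        intro x
        have hsh := hasSum_shiftZ' hcsum x
        have := hsh.sub (hgh x)
        refine this.congr_fun fun l => ?_
        ring
      have le2 := cd_step' ν hν0 hcsum (fun m => 1 - g m)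
        (fun m => by show (0:ℝ) ≤ 1 - g m; linarith [hg1 m])
        (fun m => by show 1 - g m ≤ 1; linarith [hg0 m]) hgh' a hνa m
      have le2' : 1 - g (m + a) ≤ 1 - g m := le2
      linarith
    refine ⟨g 0, fun x => ?_⟩
    obtain ⟨L, hL, rfl⟩ := exists_decomp' μ hμ0 hirr x
    have hconst : g L.sum = g 0 := sum_invariant' μ g hinv L hL
    have hx : h₁ L.sum = g L.sum * Real.exp (c * L.sum) := by
      simp only [hg]
      rw [mul_assoc, ← Real.exp_add]
      simp
    rw [hx, hconst, hfe L.sum]
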